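/- Let g be a complex simple Lie algebra with diagram automorphism θ of order 2, g₀ its fixed subalgebra, p : h* → h₀* the restriction map, ρ the half sum of positive roots of g, ρ₀ the half sum of positive roots of g₀, and ρ_s the half sum of positive short roots of the root system Φ₀ of g₀. Then p(ρ) − ρ₀ = ρ_s. -/

import Mathlib

open scoped InnerProductSpace
open Finset

noncomputable section

variable {E : Type*} [NormedAddCommGroup E] [InnerProductSpace ℝ E]

/-- Reflection in the hyperplane orthogonal to `α`. -/
def rsRefl (α v : E) : E := v - ((2 * inner ℝ v α / inner ℝ α α : ℝ)) • α

/-- Axioms for a (reduced, crystallographic) root system in a Euclidean space. -/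
def IsRootSystem (Φ : Finset E) : Prop :=
  Φ.Nonempty ∧ (∀ α ∈ Φ, α ≠ 0) ∧ (∀ α ∈ Φ, ∀ β ∈ Φ, rsRefl α β ∈ Φ) ∧
  (∀ α ∈ Φ, ∀ β ∈ Φ, ∃ n : ℤ, (2 * inner ℝ β α / inner ℝ α α : ℝ) = n) ∧
  (∀ α ∈ Φ, ∀ t : ℝ, t • α ∈ Φ → t = 1 ∨ t = -1)

/-- `pos` is a system of positive roots of `Φ`, cut out by a linear functional. -/
def IsPositiveSystem (Φ pos : Finset E) : Prop :=
  ∃ f : E →ₗ[ℝ] ℝ, (∀ α ∈ Φ, f α ≠ 0) ∧ pos = Φ.filter fun α => 0 < f α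

/-- Irreducibility: no nontrivial orthogonal decomposition of the set of roots. -/
def RSIrreducible (Φ : Finset E) : Prop :=
  ∀ S ⊆ Φ, (∀ α ∈ S, ∀ β ∈ Φ, β ∉ S → (inner ℝ α β : ℝ) = 0) → S = ∅ ∨ S = Φ

/-- `Φ` has exactly two root lengths `s < l` (short and long). -/
def TwoLengths (Φ : Finset E) (s l : ℝ) : Prop :=
  0 < s ∧ s < l ∧ (∀ α ∈ Φ, ‖α‖ = s ∨ ‖α‖ = l) ∧ (∃ α ∈ Φ, ‖α‖ = s) ∧ (∃ α ∈ Φ, ‖α‖ = l)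

open scoped Classical in
/-- The simple roots of a positive system: the indecomposable positive roots. -/
def simples (pos : Finset E) : Finset E :=
  pos.filter fun α => ∀ β ∈ pos, ∀ γ ∈ pos, α ≠ β + γ

/-- Half sum of a finite set of vectors. -/
def halfSum (pos : Finset E) : E := (2:ℝ)⁻¹ • ∑ β ∈ pos, β

open scoped Classical in
/-- The elements of a given length `s` (e.g. the short roots). -/
def ofLength (Φ : Finset E) (s : ℝ) : Finset E := Φ.filter fun α => ‖α‖ = s

/-- The Weyl group: the group generated by the reflections in the roots. -/
def weylGroup (Φ : Finset E) : Subgroup (E ≃ₗ[ℝ] E) :=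
  Subgroup.closure {g | ∃ α ∈ Φ, ∀ v, g v = rsRefl α v}

def weylOrbit (Φ : Finset E) (lam : E) : Set E := {v | ∃ g ∈ weylGroup Φ, g lam = v}

/-- `β` is a weight of the irreducible finite-dimensional representation with
(dominant) highest weight `lam` of the semisimple Lie algebra with root system `Φ`:
by the standard characterisation this holds iff `β` lies in the convex hull of the
Weyl orbit of `lam` and `lam - β` lies in the root lattice. -/
def isWeight (Φ : Finset E) (lam β : E) : Prop :=
  β ∈ convexHull ℝ (weylOrbit Φ lam) ∧ lam - β ∈ AddSubgroup.closure (Φ : Set E)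

/-- The orthogonal projection onto the fixed space of an order-`m` isometry,
realising the restriction map `p : h* → h₀*` of the folding setup. -/
def foldProj (θ : E ≃ₗᵢ[ℝ] E) (m : ℕ) : E → E :=
  fun v => (m : ℝ)⁻¹ • ∑ i ∈ Finset.range m, (⇑θ)^[i] v

/-- Formal exponential `e^v` in the group algebra of the weight space. -/
def fe (v : E) : AddMonoidAlgebra ℝ E := AddMonoidAlgebra.single v 1

end

open scoped Classical in
/-- Image of a set of roots under the folding projection. -/
noncomputable def folded {E : Type*} [NormedAddCommGroup E] [InnerProductSpace ℝ E]
    (θ : E ≃ₗᵢ[ℝ] E) (m : ℕ) (Φ : Finset E) : Finset E := Φ.image (foldProj θ m)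


/-! ### Auxiliary lemmas for stmt7 -/

section Stmt7Aux
variable {E : Type*} [NormedAddCommGroup E] [InnerProductSpace ℝ E]

lemma foldProj_two (θ : E ≃ₗᵢ[ℝ] E) (v : E) :
    foldProj θ 2 v = (2:ℝ)⁻¹ • (v + θ v) := by
  simp [foldProj, Finset.sum_range_succ]

lemma foldProj_two_add (θ : E ≃ₗᵢ[ℝ] E) (u v : E) :
    foldProj θ 2 (u + v) = foldProj θ 2 u + foldProj θ 2 v := by
  simp only [foldProj_two, map_add]
  module

lemma foldProj_two_sub (θ : E ≃ₗᵢ[ℝ] E) (u v : E) :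
    foldProj θ 2 (u - v) = foldProj θ 2 u - foldProj θ 2 v := by
  simp only [foldProj_two, map_sub]
  module

lemma foldProj_two_smul (θ : E ≃ₗᵢ[ℝ] E) (t : ℝ) (v : E) :
    foldProj θ 2 (t • v) = t • foldProj θ 2 v := by
  simp only [foldProj_two, map_smul]
  module

lemma foldProj_two_sum (θ : E ≃ₗᵢ[ℝ] E) (S : Finset E) :
    foldProj θ 2 (∑ β ∈ S, β) = ∑ β ∈ S, foldProj θ 2 β := by
  classical
  induction S using Finset.induction_on with
  | empty => simp [foldProj_two]
  | insert _ _ h ih => rw [Finset.sum_insert h, Finset.sum_insert h, foldProj_two_add, ih]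

lemma root_inner (Φ : Finset E) (c : ℝ) (hc : 0 < c) (hnorm : ∀ α ∈ Φ, ‖α‖ = c)
    (hint : ∀ α ∈ Φ, ∀ β ∈ Φ, ∃ n : ℤ, (2 * inner ℝ β α / inner ℝ α α : ℝ) = n)
    {α β : E} (hα : α ∈ Φ) (hβ : β ∈ Φ) :
    β = α ∨ β = -α ∨ ⟪β, α⟫_ℝ = c^2/2 ∨ ⟪β, α⟫_ℝ = 0 ∨ ⟪β, α⟫_ℝ = -(c^2/2) := by
  obtain ⟨n, hn⟩ := hint α hα β hβ
  have hαα : ⟪α, α⟫_ℝ = c^2 := by rw [real_inner_self_eq_norm_sq, hnorm α hα]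
  have hc2 : (0:ℝ) < c^2 := by positivity
  have hval : ⟪β, α⟫_ℝ = n * c^2 / 2 := by
    rw [hαα] at hn; field_simp at hn ⊢; linarith
  have hcs : |⟪β, α⟫_ℝ| ≤ c^2 := by
    have := abs_real_inner_le_norm β α
    rw [hnorm α hα, hnorm β hβ, ← sq] at this; exact this
  have hnb : |(n:ℝ)| ≤ 2 := by
    rw [hval, abs_div, abs_mul, abs_of_pos hc2] at hcs
    rw [abs_of_pos (by norm_num : (0:ℝ) < 2)] at hcs
    rw [div_le_iff₀ (by norm_num)] at hcs
    nlinarith [abs_nonneg (n:ℝ)]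
  have hn2 : -2 ≤ n ∧ n ≤ 2 := by
    rw [abs_le] at hnb; exact ⟨by exact_mod_cast hnb.1, by exact_mod_cast hnb.2⟩
  obtain ⟨h1, h2⟩ := hn2
  interval_cases n
  · right; left
    have h : ⟪-β, α⟫_ℝ = ‖(-β)‖ * ‖α‖ := by
      rw [inner_neg_left, norm_neg, hnorm α hα, hnorm β hβ, hval]; push_cast; ring
    have := inner_eq_norm_mul_iff_real.mp h
    rw [norm_neg, hnorm α hα, hnorm β hβ] at this
    have := smul_right_injective E (ne_of_gt hc) this
    exact neg_eq_iff_eq_neg.mp this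
  · right; right; right; right; rw [hval]; push_cast; ring
  · right; right; right; left; rw [hval]; push_cast; ring
  · right; right; left; rw [hval]; push_cast; ring
  · left
    have h : ⟪β, α⟫_ℝ = ‖β‖ * ‖α‖ := by
      rw [hnorm α hα, hnorm β hβ, hval]; push_cast; ring
    have := inner_eq_norm_mul_iff_real.mp h
    rw [hnorm α hα, hnorm β hβ] at this
    exact smul_right_injective E (ne_of_gt hc) this

end Stmt7Aux

/-- in the order-2 diagram automorphism (folding) setup,
`p(ρ) - ρ₀ = ρ_s`. Here `Φ` is the (simply laced) root system of `g`, `θ` the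
order-2 automorphism, `p = foldProj θ 2` the restriction map, the folded system
`folded θ 2 Φ` is the root system `Φ₀` of the fixed subalgebra `g₀`, `ρ, ρ₀` the
half sums of positive roots and `ρ_s` the half sum of the positive short roots of `Φ₀`. -/
theorem stmt7 {E : Type*} [NormedAddCommGroup E] [InnerProductSpace ℝ E]
    (Φ pos : Finset E) (hRS : IsRootSystem Φ) (hpos : IsPositiveSystem Φ pos)
    (hirr : RSIrreducible Φ) (hlaced : ∀ α ∈ Φ, ∀ β ∈ Φ, ‖α‖ = ‖β‖)
    (θ : E ≃ₗᵢ[ℝ] E) (hord : (⇑θ)^[2] = id) (hne : ⇑θ ≠ id)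
    (hΦθ : ∀ α ∈ Φ, θ α ∈ Φ) (hposθ : ∀ α ∈ pos, θ α ∈ pos)
    (s l : ℝ) (h2 : TwoLengths (folded θ 2 Φ) s l)
    (hred : ∀ v ∈ folded θ 2 Φ, ∀ t : ℝ, t • v ∈ folded θ 2 Φ → t = 1 ∨ t = -1)
 :
    foldProj θ 2 (halfSum pos) - halfSum (folded θ 2 pos) = halfSum (ofLength (folded θ 2 pos) s) := by
  classical
  obtain ⟨hΦne, hne0, hrefl, hint, -⟩ := hRS
  obtain ⟨α₀, hα₀⟩ := hΦne
  have hc : 0 < ‖α₀‖ := norm_pos_iff.mpr (hne0 α₀ hα₀)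
  set c := ‖α₀‖ with hcdef
  have hnorm : ∀ α ∈ Φ, ‖α‖ = c := fun α hα => hlaced α hα α₀ hα₀
  have hθθ : ∀ v : E, θ (θ v) = v := fun v => by
    simpa [Function.iterate_succ, Function.iterate_zero] using congrFun hord v
  have hΦpos : pos ⊆ Φ := by
    obtain ⟨f, -, hf⟩ := hpos; rw [hf]; exact Finset.filter_subset _ _
  have hpmem : ∀ α ∈ Φ, foldProj θ 2 α ∈ folded θ 2 Φ :=
    fun α h => Finset.mem_image_of_mem _ h
  have hzero : (0:E) ∉ folded θ 2 Φ := by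
    intro h
    have := hred 0 h 2 (by simpa using h)
    norm_num at this
  have hnneg : ∀ α ∈ Φ, θ α ≠ -α := by
    intro α hα h
    have h0 : foldProj θ 2 α = 0 := by rw [foldProj_two, h]; module
    exact hzero (h0 ▸ hpmem α hα)
  have hpfix : ∀ v : E, θ v = v → foldProj θ 2 v = v := by
    intro v h; rw [foldProj_two, h]; module
  -- orthogonality of α and θ α for non-fixed roots
  have horth : ∀ α ∈ Φ, θ α ≠ α → ⟪θ α, α⟫_ℝ = 0 := by
    intro α hα hαne
    have hθα : θ α ∈ Φ := hΦθ α hα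
    rcases root_inner Φ c hc hnorm hint hα hθα with h | h | h | h | h
    · exact absurd h hαne
    · exact absurd h (hnneg α hα)
    · exfalso
      have hδ : rsRefl (θ α) α ∈ Φ := hrefl (θ α) hθα α hα
      have hδeq : rsRefl (θ α) α = α - θ α := by
        rw [rsRefl]
        have h1 : ⟪α, θ α⟫_ℝ = c^2/2 := by rw [real_inner_comm]; exact h
        have h2' : ⟪θ α, θ α⟫_ℝ = c^2 := by
          rw [real_inner_self_eq_norm_sq, hnorm _ hθα]
        rw [h1, h2']
        have hco : (2 * (c^2/2) / c^2 : ℝ) = 1 := by field_simp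
        rw [hco, one_smul]
      rw [hδeq] at hδ
      exact hnneg _ hδ (by rw [map_sub, hθθ]; abel)
    · exact h
    · exfalso
      have hδ : rsRefl (θ α) α ∈ Φ := hrefl (θ α) hθα α hα
      have hδeq : rsRefl (θ α) α = α + θ α := by
        rw [rsRefl]
        have h1 : ⟪α, θ α⟫_ℝ = -(c^2/2) := by rw [real_inner_comm]; exact h
        have h2' : ⟪θ α, θ α⟫_ℝ = c^2 := by
          rw [real_inner_self_eq_norm_sq, hnorm _ hθα]
        rw [h1, h2']
        have hco : (2 * (-(c^2/2)) / c^2 : ℝ) = -1 := by field_simp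
        rw [hco]; module
      rw [hδeq] at hδ
      have hfix : θ (α + θ α) = α + θ α := by rw [map_add, hθθ]; abel
      have hmem1 : α + θ α ∈ folded θ 2 Φ := by
        have := hpmem _ hδ; rwa [hpfix _ hfix] at this
      have hmem2 : (2:ℝ)⁻¹ • (α + θ α) ∈ folded θ 2 Φ := by
        have := hpmem α hα; rwa [foldProj_two] at this
      have := hred _ hmem1 _ hmem2
      norm_num at this
  -- norm of folded non-fixed roots
  have hpd : ∀ α ∈ Φ, θ α ≠ α → ‖foldProj θ 2 α‖ = Real.sqrt (c^2/2) := by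
    intro α hα hαne
    have h0 : ⟪α, θ α⟫_ℝ = 0 := by rw [real_inner_comm]; exact horth α hα hαne
    have hsq : ‖foldProj θ 2 α‖^2 = c^2/2 := by
      rw [foldProj_two, norm_smul, mul_pow, norm_add_sq_real, h0, θ.norm_map,
        hnorm α hα, Real.norm_eq_abs]
      rw [abs_of_pos (by norm_num : (0:ℝ) < 2⁻¹)]
      ring
    rw [← Real.sqrt_sq (norm_nonneg _), hsq]
  set d := Real.sqrt (c^2/2) with hddef
  have hdc : d < c := by
    have h1 : d^2 < c^2 := by
      rw [hddef, Real.sq_sqrt (by positivity : (0:ℝ) ≤ c^2/2)]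
      nlinarith
    nlinarith [Real.sqrt_nonneg (c^2/2), hddef ▸ h1]
  -- identify s with d
  obtain ⟨hs0, hsl, hlen, ⟨as, has, hass⟩, ⟨al, hal, hall⟩⟩ := h2
  simp only [folded, Finset.mem_image] at has hal
  obtain ⟨a, ha, rfl⟩ := has
  obtain ⟨b, hb, rfl⟩ := hal
  have hsd : s = d := by
    by_cases hfa : θ a = a
    · exfalso
      rw [hpfix a hfa, hnorm a ha] at hass
      by_cases hfb : θ b = b
      · rw [hpfix b hfb, hnorm b hb] at hall
        rw [← hass, ← hall] at hsl; exact lt_irrefl _ hsl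
      · rw [hpd b hb hfb] at hall
        rw [← hass, ← hall] at hsl
        exact absurd (hsl.trans hdc) (lt_irrefl c)
    · rw [← hass, hpd a ha hfa]
  -- fibers of the projection on non-fixed roots are θ-orbits
  have hinj : ∀ β ∈ Φ, ∀ γ ∈ Φ, θ β ≠ β → θ γ ≠ γ →
      foldProj θ 2 β = foldProj θ 2 γ → γ = β ∨ γ = θ β := by
    intro β hβ γ hγ hfβ hfγ hpq
    have hθγ : θ γ ∈ Φ := hΦθ γ hγ
    have hc2 : (0:ℝ) < c^2 := by positivity
    have hsum : ⟪β, γ⟫_ℝ + ⟪β, θ γ⟫_ℝ = c^2 := by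
      have he : ⟪foldProj θ 2 β, foldProj θ 2 γ⟫_ℝ = c^2/2 := by
        rw [hpq, real_inner_self_eq_norm_sq, hpd γ hγ hfγ,
          Real.sq_sqrt (by positivity)]
      rw [foldProj_two, foldProj_two, real_inner_smul_left, real_inner_smul_right,
        inner_add_left, inner_add_right, inner_add_right] at he
      have e1 : ⟪θ β, θ γ⟫_ℝ = ⟪β, γ⟫_ℝ := θ.inner_map_map β γ
      have e2 : ⟪θ β, γ⟫_ℝ = ⟪β, θ γ⟫_ℝ := by
        have := θ.inner_map_map β (θ γ); rwa [hθθ] at this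
      rw [e1, e2] at he
      linarith
    have hcs1 : |⟪β, γ⟫_ℝ| ≤ c^2 := by
      have := abs_real_inner_le_norm β γ
      rw [hnorm β hβ, hnorm γ hγ, ← sq] at this; exact this
    have hcs2 : |⟪β, θ γ⟫_ℝ| ≤ c^2 := by
      have := abs_real_inner_le_norm β (θ γ)
      rw [hnorm β hβ, hnorm _ hθγ, ← sq] at this; exact this
    rcases root_inner Φ c hc hnorm hint hγ hβ with h | h | h | h | h
    · exact Or.inl h.symm
    · exfalso
      have : ⟪β, γ⟫_ℝ = -c^2 := by
        rw [h, inner_neg_left, real_inner_self_eq_norm_sq, hnorm γ hγ]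
      have := (abs_le.mp hcs2).2
      linarith
    all_goals {
      rcases root_inner Φ c hc hnorm hint hθγ hβ with h' | h' | h' | h' | h'
      · exact Or.inr (by rw [h', hθθ])
      · exfalso
        have : ⟪β, θ γ⟫_ℝ = -c^2 := by
          rw [h', inner_neg_left, real_inner_self_eq_norm_sq, hnorm _ hθγ]
        have := (abs_le.mp hcs1).2
        linarith
      all_goals {
        exfalso
        have hbγ : ⟪β, γ⟫_ℝ = c^2/2 := by linarith
        have hδ : rsRefl γ β ∈ Φ := hrefl γ hγ β hβ
        have hδeq : rsRefl γ β = β - γ := by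
          rw [rsRefl]
          have h2' : ⟪γ, γ⟫_ℝ = c^2 := by
            rw [real_inner_self_eq_norm_sq, hnorm γ hγ]
          rw [hbγ, h2']
          have hco : (2 * (c^2/2) / c^2 : ℝ) = 1 := by field_simp
          rw [hco, one_smul]
        have h0 : foldProj θ 2 (β - γ) = 0 := by
          rw [foldProj_two_sub, hpq, sub_self]
        exact hzero (h0 ▸ hpmem _ (hδeq ▸ hδ))
      }
    }
  -- bookkeeping: split positive roots into fixed part and pairs
  set F := pos.filter (fun β => θ β = β) with hF
  set N := pos.filter (fun β => ¬ θ β = β) with hN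
  have hFim : F.image (foldProj θ 2) = F := by
    have h1 : F.image (foldProj θ 2) = F.image id :=
      Finset.image_congr (fun x hx => hpfix x ((Finset.mem_filter.mp hx).2))
    rw [h1, Finset.image_id]
  have himg : folded θ 2 pos = F ∪ N.image (foldProj θ 2) := by
    rw [folded]
    conv_lhs => rw [← Finset.filter_union_filter_not_eq (fun β => θ β = β) pos]
    rw [Finset.image_union, hFim]
  have hFnorm : ∀ v ∈ F, ‖v‖ = c :=
    fun v hv => hnorm v (hΦpos (Finset.mem_filter.mp hv).1)
  have hNnorm : ∀ v ∈ N.image (foldProj θ 2), ‖v‖ = d := by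
    intro v hv
    obtain ⟨β, hβ, rfl⟩ := Finset.mem_image.mp hv
    exact hpd β (hΦpos (Finset.mem_filter.mp hβ).1) (Finset.mem_filter.mp hβ).2
  have hdisj : Disjoint F (N.image (foldProj θ 2)) := by
    rw [Finset.disjoint_left]
    intro v hvF hvN
    have h1 := hFnorm v hvF
    rw [hNnorm v hvN] at h1
    exact (ne_of_lt hdc) h1
  have hofl : ofLength (folded θ 2 pos) s = N.image (foldProj θ 2) := by
    have h1 : F.filter (fun v => ‖v‖ = s) = ∅ :=
      Finset.filter_false_of_mem (fun v hv => by
        rw [hFnorm v hv, hsd]; exact ne_of_gt hdc)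
    have h2' : (N.image (foldProj θ 2)).filter (fun v => ‖v‖ = s) =
        N.image (foldProj θ 2) :=
      Finset.filter_true_of_mem (fun v hv => by rw [hNnorm v hv, hsd])
    rw [himg, ofLength, Finset.filter_union, h1, h2', Finset.empty_union]
  -- double counting of the pairs
  have hsumN : ∑ v ∈ N.image (foldProj θ 2), (v + v) = ∑ β ∈ N, foldProj θ 2 β := by
    refine Finset.sum_image' _ ?_
    intro β hβ
    obtain ⟨hβpos, hβf⟩ := Finset.mem_filter.mp hβ
    have hβΦ := hΦpos hβpos
    have hpθ : foldProj θ 2 (θ β) = foldProj θ 2 β := by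
      rw [foldProj_two, foldProj_two, hθθ, add_comm]
    have hfib : N.filter (fun γ => foldProj θ 2 γ = foldProj θ 2 β) = {β, θ β} := by
      ext γ
      simp only [Finset.mem_filter, Finset.mem_insert, Finset.mem_singleton]
      constructor
      · rintro ⟨hγN, hγe⟩
        obtain ⟨hγpos, hγf⟩ := Finset.mem_filter.mp hγN
        exact hinj β hβΦ γ (hΦpos hγpos) hβf hγf hγe.symm
      · rintro (rfl | rfl)
        · exact ⟨hβ, rfl⟩
        · refine ⟨Finset.mem_filter.mpr ⟨hposθ β hβpos, ?_⟩, hpθ⟩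
          rw [hθθ]; exact fun h => hβf h.symm
    have hβθβ : β ≠ θ β := fun h => hβf h.symm
    rw [hfib, Finset.sum_pair hβθβ, hpθ]
  -- final computation
  have e1 : foldProj θ 2 (halfSum pos) =
      (2:ℝ)⁻¹ • ((∑ β ∈ F, β) + ∑ β ∈ N, foldProj θ 2 β) := by
    rw [halfSum, foldProj_two_smul, foldProj_two_sum]
    congr 1
    rw [← Finset.sum_filter_add_sum_filter_not pos (fun β => θ β = β) (foldProj θ 2)]
    congr 1
    exact Finset.sum_congr rfl (fun β hβ => hpfix β (Finset.mem_filter.mp hβ).2)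
  have e2 : halfSum (folded θ 2 pos) =
      (2:ℝ)⁻¹ • ((∑ β ∈ F, β) + ∑ v ∈ N.image (foldProj θ 2), v) := by
    rw [himg, halfSum, Finset.sum_union hdisj]
  have e3 : halfSum (ofLength (folded θ 2 pos) s) =
      (2:ℝ)⁻¹ • ∑ v ∈ N.image (foldProj θ 2), v := by
    rw [hofl, halfSum]
  rw [e1, e2, e3, ← hsumN, Finset.sum_add_distrib]
  module
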